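/- For any ω ∈ ℝ³, the right trivialized tangent of the Cayley map and its inverse, given by dcay_ω = (2/(4+‖ω‖²))(2I₃ + ω̂) and dcay_ω⁻¹ = I₃ - ω̂/2 + (ωωᵀ)/4, are mutually inverse 3×3 matrices: dcay_ω · dcay_ω⁻¹ = I₃. -/
import Mathlib


open Matrix

def hat (x : Fin 3 → ℝ) : Matrix (Fin 3) (Fin 3) ℝ :=
  !![0, -x 2, x 1; x 2, 0, -x 0; -x 1, x 0, 0]

set_option maxHeartbeats 2000000 in
/-- The right trivialized tangent of the Cayley map,
`dcay_ω = (2/(4+‖ω‖²))(2I₃ + ω̂)`, and its claimed inverse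
`dcay_ω⁻¹ = I₃ - ω̂/2 + ωωᵀ/4` are mutually inverse matrices. -/
theorem dcay_mul_dcayInv (ω : Fin 3 → ℝ) :
    ((2 / (4 + (ω 0 ^ 2 + ω 1 ^ 2 + ω 2 ^ 2))) • ((2 : ℝ) • (1 : Matrix (Fin 3) (Fin 3) ℝ) + hat ω)) *
      (1 - (1 / 2 : ℝ) • hat ω + (1 / 4 : ℝ) • vecMulVec ω ω) = 1 := by
  have hpos : (4 + (ω 0 ^ 2 + ω 1 ^ 2 + ω 2 ^ 2)) ≠ 0 := by positivity
  ext i j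
  fin_cases i <;> fin_cases j <;>
    simp [hat, Matrix.mul_apply, Matrix.one_apply, Fin.sum_univ_succ, vecMulVec_apply] <;>
    field_simp <;> ring
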